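/- Let f be a piecewise λ-contraction on a compact metric space X with connected open balls. If C = {C_j}_{j∈Λ} is a strongly invariant collection of finitely many pairwise disjoint open subsets of X, then there exist finitely many periodic orbits γ_1,…,γ_r of f contained in ⋃_j C_j such that ω(f,y) ∈ {γ_1,…,γ_r} for every y ∈ ⋃_j C_j. -/

import Mathlib

/-- The ω-limit set of `x` under `f`. -/
def omegaSet {X : Type*} [TopologicalSpace X] (f : X → X) (x : X) : Set X :=
  ⋂ m : ℕ, closure (⋃ n ∈ Set.Ici m, ({f^[n] x} : Set X))

/-- `γ` is a periodic orbit of `f`. -/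
def IsPeriodicOrbit {X : Type*} (f : X → X) (γ : Set X) : Prop :=
  ∃ (x : X) (p : ℕ), 0 < p ∧ f^[p] x = x ∧ γ = {y | ∃ n : ℕ, f^[n] x = y}

/-- if `𝒞` is a strongly invariant finite collection of pairwise disjoint
open subsets of `X`, then there are finitely many periodic orbits `γ₁,…,γ_r` of `f`
contained in `⋃ 𝒞` such that `ω(f,y)` is one of them for every `y ∈ ⋃ 𝒞`. -/
theorem strongly_invariant_collection_asymptotic_periodicity
    {X : Type*} [MetricSpace X] [CompactSpace X]
    (hball : ∀ (x : X) (r : ℝ), IsPreconnected (Metric.ball x r))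
    (f : X → X) (N : ℕ) (A : Fin N → Set X) (φ : Fin N → X → X)
    (lam : NNReal) (hlam0 : 0 < lam) (hlam : lam < 1)
    (hopen : ∀ i, IsOpen (A i))
    (hconn : ∀ i, IsConnected (A i))
    (hdisj : ∀ i j, i ≠ j → Disjoint (A i) (A j))
    (hdense : Dense (⋃ i, A i))
    (hlip : ∀ i, LipschitzWith lam (φ i))
    (hbilip : ∀ i, ∃ K : NNReal, AntilipschitzWith K (φ i))
    (heq : ∀ i, Set.EqOn f (φ i) (A i))
    (𝒞 : Finset (Set X))
    (hCopen : ∀ C ∈ 𝒞, IsOpen C)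
    (hCdisj : ∀ C ∈ 𝒞, ∀ C' ∈ 𝒞, C ≠ C' → Disjoint C C')
    -- strong invariance:
    (hSI : ∃ n₀ : ℕ, 1 ≤ n₀ ∧
      (∀ C ∈ 𝒞, ∃ C' ∈ 𝒞, f '' C ⊆ C') ∧
      (∀ B ∈ 𝒞, ∀ n, n₀ ≤ n → ∃ B' ∈ 𝒞, closure (f^[n] '' B) ⊆ B') ∧
      (∀ C ∈ 𝒞, ∃ i, C ⊆ A i)) :
    ∃ (r : ℕ) (γ : Fin r → Set X),
      (∀ k, IsPeriodicOrbit f (γ k) ∧ γ k ⊆ ⋃ C ∈ 𝒞, C) ∧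
      (∀ y ∈ ⋃ C ∈ 𝒞, (C : Set X), ∃ k, omegaSet f y = γ k) := by
  classical
  obtain ⟨n₀, hn₀, hfwd, hcl, hsub⟩ := hSI
  -- members as a finite type
  set T := {C : Set X // C ∈ 𝒞} with hT
  haveI : Fintype T := FinsetCoe.fintype 𝒞
  -- the forward map on members
  have hσex : ∀ C : T, ∃ C' : T, f '' C.1 ⊆ C'.1 := by
    rintro ⟨C, hC⟩
    obtain ⟨C', hC', h⟩ := hfwd C hC
    exact ⟨⟨C', hC'⟩, h⟩
  choose σ hσf using hσex
  -- one-step Lipschitz estimate on members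
  have hstep : ∀ (C : T) (a b : X), a ∈ C.1 → b ∈ C.1 →
      dist (f a) (f b) ≤ (lam : ℝ) * dist a b := by
    rintro ⟨C, hC⟩ a b ha hb
    obtain ⟨i, hi⟩ := hsub C hC
    rw [heq i (hi ha), heq i (hi hb)]
    exact (hlip i).dist_le_mul a b
  -- iterated estimate
  have hiter : ∀ (m : ℕ) (C : T) (a b : X), a ∈ C.1 → b ∈ C.1 →
      f^[m] a ∈ (σ^[m] C).1 ∧ dist (f^[m] a) (f^[m] b) ≤ (lam : ℝ) ^ m * dist a b := by
    intro m
    induction m with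
    | zero =>
      intro C a b ha _
      simpa using ha
    | succ m ih =>
      intro C a b ha hb
      have h1 := ih C a b ha hb
      have h2 := ih C b a hb ha
      constructor
      · rw [Function.iterate_succ_apply', Function.iterate_succ_apply']
        exact hσf (σ^[m] C) ⟨_, h1.1, rfl⟩
      · rw [Function.iterate_succ_apply' f m a, Function.iterate_succ_apply' f m b]
        calc dist (f (f^[m] a)) (f (f^[m] b)) ≤ (lam : ℝ) * dist (f^[m] a) (f^[m] b) :=
              hstep (σ^[m] C) _ _ h1.1 h2.1
          _ ≤ (lam : ℝ) * ((lam : ℝ) ^ m * dist a b) :=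
              mul_le_mul_of_nonneg_left h1.2 lam.coe_nonneg
          _ = (lam : ℝ) ^ (m + 1) * dist a b := by ring
  -- eventual periodicity of σ-orbits
  have hep : ∀ C : T, ∃ m p : ℕ, 0 < p ∧ σ^[m + p] C = σ^[m] C := by
    intro C
    obtain ⟨a, b, hab, he⟩ := Fintype.exists_ne_map_eq_of_card_lt
      (fun k : Fin (Fintype.card T + 1) => σ^[(k : ℕ)] C) (by simp)
    rcases lt_or_gt_of_ne hab with h | h
    · refine ⟨a, b - a, ?_, ?_⟩
      · omega
      · have : (a : ℕ) + ((b : ℕ) - (a : ℕ)) = b := by omega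
        rw [this, he]
    · refine ⟨b, a - b, ?_, ?_⟩
      · omega
      · have : (b : ℕ) + ((a : ℕ) - (b : ℕ)) = a := by omega
        rw [this, ← he]
  -- main construction: for each nonempty member, an attracting periodic orbit
  have main : ∀ C : T, ∃ γ : Set X, C.1.Nonempty →
      (IsPeriodicOrbit f γ ∧ γ ⊆ (⋃ B ∈ 𝒞, B) ∧ ∀ y ∈ C.1, omegaSet f y = γ) := by
    intro C
    by_cases hCne : C.1.Nonempty
    swap
    · exact ⟨∅, fun h => absurd h hCne⟩
    obtain ⟨m₀, p, hp, hper⟩ := hep C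
    set n : ℕ := n₀ * p with hn
    have hnn₀ : n₀ ≤ n := Nat.le_mul_of_pos_right n₀ hp
    have hnpos : 0 < n := lt_of_lt_of_le hn₀ hnn₀
    set D : T := σ^[m₀] C with hD
    have hDper : σ^[p] D = D := by
      have h2 : σ^[p + m₀] C = σ^[m₀] C := by rw [add_comm]; exact hper
      rw [Function.iterate_add_apply] at h2
      rw [hD]; exact h2
    have hDmul : ∀ k, σ^[k * p] D = D := by
      intro k
      induction k with
      | zero => simp
      | succ k ih =>
        have : (k + 1) * p = k * p + p := by ring
        rw [this, Function.iterate_add_apply, hDper, ih]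
    have hDn : σ^[n] D = D := hDmul n₀
    have hDkn : ∀ k, σ^[k * n] D = D := by
      intro k
      induction k with
      | zero => simp
      | succ k ih =>
        have : (k + 1) * n = k * n + n := by ring
        rw [this, Function.iterate_add_apply, hDn, ih]
    -- D is nonempty
    obtain ⟨c₀, hc₀⟩ := hCne
    have hDne : D.1.Nonempty := ⟨f^[m₀] c₀, (hiter m₀ C c₀ c₀ hc₀ hc₀).1⟩
    -- f^[n] maps D into D
    have hfD : ∀ a ∈ D.1, f^[n] a ∈ D.1 := by
      intro a ha
      have := (hiter n D a a ha ha).1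
      rwa [hDn] at this
    -- the compact attractor K
    set K : Set X := closure (f^[n] '' D.1) with hK
    have hKD : K ⊆ D.1 := by
      obtain ⟨B', hB', hB'sub⟩ := hcl D.1 D.2 n hnn₀
      have hBD : B' = D.1 := by
        by_contra hne
        obtain ⟨d₀, hd₀⟩ := hDne
        have h1 : f^[n] d₀ ∈ B' := hB'sub (subset_closure ⟨d₀, hd₀, rfl⟩)
        have h2 : f^[n] d₀ ∈ D.1 := hfD d₀ hd₀
        exact (hCdisj B' hB' D.1 D.2 hne).ne_of_mem h1 h2 rfl
      rw [← hBD]; exact hB'sub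
    have hKclosed : IsClosed K := isClosed_closure
    have hKne : K.Nonempty := by
      obtain ⟨d₀, hd₀⟩ := hDne
      exact ⟨f^[n] d₀, subset_closure ⟨d₀, hd₀, rfl⟩⟩
    have hgK : ∀ x ∈ K, f^[n] x ∈ K := fun x hx =>
      subset_closure ⟨x, hKD hx, rfl⟩
    -- fixed point of f^[n] on K
    haveI : CompleteSpace K := hKclosed.completeSpace_coe
    haveI : Nonempty K := ⟨⟨hKne.choose, hKne.choose_spec⟩⟩
    set G : K → K := fun x => ⟨f^[n] x.1, hgK x.1 x.2⟩ with hG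
    have hGlip : LipschitzWith (lam ^ n) G := by
      apply LipschitzWith.of_dist_le_mul
      rintro ⟨a, ha⟩ ⟨b, hb⟩
      have h := (hiter n D a b (hKD ha) (hKD hb)).2
      simpa [Subtype.dist_eq, hG] using h
    have hGcon : ContractingWith (lam ^ n) G :=
      ⟨pow_lt_one₀ (zero_le) hlam (Nat.pos_iff_ne_zero.mp hnpos), hGlip⟩
    set xs : K := hGcon.fixedPoint G with hxs
    have hfixG : G xs = xs := hGcon.fixedPoint_isFixedPt
    set x : X := xs.1 with hx
    have hxK : x ∈ K := xs.2
    have hxD : x ∈ D.1 := hKD hxK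
    have hfixn : f^[n] x = x := congrArg Subtype.val hfixG
    have hfixkn : ∀ k, f^[k * n] x = x := by
      intro k
      induction k with
      | zero => simp
      | succ k ih =>
        have : (k + 1) * n = k * n + n := by ring
        rw [this, Function.iterate_add_apply, hfixn, ih]
    -- the periodic orbit
    refine ⟨{y | ∃ k : ℕ, f^[k] x = y}, fun _ => ⟨⟨x, n, hnpos, hfixn, rfl⟩, ?_, ?_⟩⟩
    · -- the orbit is inside the union
      rintro _ ⟨k, rfl⟩
      have := (hiter k D x x hxD hxD).1
      exact Set.mem_biUnion (σ^[k] D).2 this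
    · -- ω-limit sets
      intro y hy
      set γ : Set X := {y | ∃ k : ℕ, f^[k] x = y} with hγ
      have hγne : γ.Nonempty := ⟨x, 0, rfl⟩
      have hγfin : γ.Finite := by
        apply Set.Finite.subset ((Set.finite_Iio n).image (fun j => f^[j] x))
        rintro _ ⟨k, rfl⟩
        refine ⟨k % n, Nat.mod_lt k hnpos, ?_⟩
        conv_rhs => rw [← Nat.mod_add_div k n]
        rw [Function.iterate_add_apply, mul_comm n (k / n), hfixkn]
      have hγclosed : IsClosed γ := hγfin.isClosed
      set rr : ℝ := (lam : ℝ) ^ n with hrr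
      have hr0 : 0 ≤ rr := pow_nonneg lam.coe_nonneg n
      have hr1 : rr < 1 := pow_lt_one₀ lam.coe_nonneg (NNReal.coe_lt_one.mpr hlam)
        (Nat.pos_iff_ne_zero.mp hnpos)
      set δ₀ : ℝ := dist (f^[m₀] y) x with hδ₀
      have hmemD : ∀ k, f^[m₀ + k * n] y ∈ D.1 := by
        intro k
        have h1 := (hiter (m₀ + k * n) C y y hy hy).1
        have h2 : σ^[m₀ + k * n] C = D := by
          rw [add_comm, Function.iterate_add_apply, ← hD, hDkn]
        rwa [h2] at h1
      have hdistD : ∀ k, dist (f^[m₀ + k * n] y) x ≤ rr ^ k * δ₀ := by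
        intro k
        induction k with
        | zero => simp [hδ₀]
        | succ k ih =>
          have harith : m₀ + (k + 1) * n = n + (m₀ + k * n) := by ring
          rw [harith, Function.iterate_add_apply]
          have h := (hiter n D (f^[m₀ + k * n] y) x (hmemD k) hxD).2
          rw [hfixn] at h
          calc dist (f^[n] (f^[m₀ + k * n] y)) x ≤ rr * dist (f^[m₀ + k * n] y) x := h
            _ ≤ rr * (rr ^ k * δ₀) := mul_le_mul_of_nonneg_left ih hr0
            _ = rr ^ (k + 1) * δ₀ := by ring
      have hkey : ∀ k j, dist (f^[m₀ + k * n + j] y) (f^[j] x) ≤ rr ^ k * δ₀ := by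
        intro k j
        have harith : m₀ + k * n + j = j + (m₀ + k * n) := by ring
        rw [harith, Function.iterate_add_apply]
        have h := (hiter j D (f^[m₀ + k * n] y) x (hmemD k) hxD).2
        calc dist (f^[j] (f^[m₀ + k * n] y)) (f^[j] x)
            ≤ (lam : ℝ) ^ j * dist (f^[m₀ + k * n] y) x := h
          _ ≤ 1 * (rr ^ k * δ₀) := by
              apply mul_le_mul
              · exact pow_le_one₀ lam.coe_nonneg (NNReal.coe_le_one.mpr hlam.le)
              · exact hdistD k
              · exact dist_nonneg
              · exact zero_le_one
          _ = rr ^ k * δ₀ := one_mul _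
      have htend : Filter.Tendsto (fun k : ℕ => rr ^ k * δ₀) Filter.atTop (nhds 0) := by
        have h := tendsto_pow_atTop_nhds_zero_of_lt_one hr0 hr1
        simpa using h.mul_const δ₀
      apply Set.Subset.antisymm
      · -- ω(f,y) ⊆ γ
        intro z hz
        rw [hγclosed.mem_iff_infDist_zero hγne]
        refine le_antisymm ?_ Metric.infDist_nonneg
        apply le_of_forall_pos_le_add
        intro ε hε
        obtain ⟨k, hk⟩ := (htend.eventually (gt_mem_nhds (half_pos hε))).exists
        have hz' : z ∈ closure (⋃ m ∈ Set.Ici (m₀ + k * n), ({f^[m] y} : Set X)) := by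
          have := Set.mem_iInter.mp hz (m₀ + k * n)
          exact this
        obtain ⟨w, hw, hwd⟩ := Metric.mem_closure_iff.mp hz' (ε / 2) (half_pos hε)
        simp only [Set.mem_iUnion, Set.mem_singleton_iff, exists_prop] at hw
        obtain ⟨m', hm', rfl⟩ := hw
        rw [Set.mem_Ici] at hm'
        -- decompose m'
        have hm₀ : m₀ ≤ m' := le_trans (Nat.le_add_right _ _) hm'
        set t : ℕ := m' - m₀ with ht
        set q : ℕ := t / n with hq
        set j : ℕ := t % n with hj
        have h1 : n * q + j = t := Nat.div_add_mod t n
        have h2 : m₀ + t = m' := by omega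
        have hm'' : m' = m₀ + q * n + j := by
          calc m' = m₀ + t := h2.symm
            _ = m₀ + (n * q + j) := by rw [h1]
            _ = m₀ + q * n + j := by ring
        have hkt : k * n ≤ t := by
          have : m₀ + k * n ≤ m₀ + t := by rw [h2]; exact hm'
          omega
        have hkq : k ≤ q := (Nat.le_div_iff_mul_le hnpos).mpr hkt
        have hd : dist (f^[m'] y) (f^[j] x) ≤ rr ^ k * δ₀ := by
          rw [hm'']
          calc dist (f^[m₀ + q * n + j] y) (f^[j] x) ≤ rr ^ q * δ₀ := hkey q j
            _ ≤ rr ^ k * δ₀ :=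
              mul_le_mul_of_nonneg_right (pow_le_pow_of_le_one hr0 hr1.le hkq)
                dist_nonneg
        have hmemγ : f^[j] x ∈ γ := ⟨j, rfl⟩
        calc Metric.infDist z γ ≤ dist z (f^[j] x) := Metric.infDist_le_dist_of_mem hmemγ
          _ ≤ dist z (f^[m'] y) + dist (f^[m'] y) (f^[j] x) := dist_triangle _ _ _
          _ ≤ ε / 2 + rr ^ k * δ₀ := add_le_add hwd.le hd
          _ ≤ ε / 2 + ε / 2 := add_le_add le_rfl hk.le
          _ = 0 + ε := by ring
      · -- γ ⊆ ω(f,y)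
        rintro _ ⟨j, rfl⟩
        rw [omegaSet, Set.mem_iInter]
        intro M
        rw [Metric.mem_closure_iff]
        intro ε hε
        obtain ⟨k, hk1, hk2⟩ :=
          ((htend.eventually (gt_mem_nhds hε)).and (Filter.eventually_ge_atTop M)).exists
        refine ⟨f^[m₀ + k * n + j] y, ?_, ?_⟩
        · have hMle : M ≤ m₀ + k * n + j := by
            have h3 : k ≤ k * n := Nat.le_mul_of_pos_right k hnpos
            omega
          simp only [Set.mem_iUnion, Set.mem_singleton_iff, exists_prop]
          exact ⟨m₀ + k * n + j, hMle, rfl⟩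
        · rw [dist_comm]
          exact lt_of_le_of_lt (hkey k j) hk1
  -- assemble the finitely many orbits
  choose γfun hγfun using main
  set Γ : Finset (Set X) := (𝒞.attach.filter (fun C => (C.1).Nonempty)).image γfun with hΓ
  refine ⟨Γ.card, fun k => (Γ.equivFin.symm k : Set X), ?_, ?_⟩
  · intro k
    have hmem : ((Γ.equivFin.symm k : Γ) : Set X) ∈
        Finset.image γfun (Finset.filter (fun C => (C.1).Nonempty) 𝒞.attach) :=
      (Γ.equivFin.symm k).2
    obtain ⟨B, hB, hBeq⟩ := Finset.mem_image.mp hmem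
    rw [Finset.mem_filter] at hB
    obtain ⟨h1, h2, -⟩ := hγfun B hB.2
    show IsPeriodicOrbit f ((Γ.equivFin.symm k : Γ) : Set X) ∧
      ((Γ.equivFin.symm k : Γ) : Set X) ⊆ ⋃ C ∈ 𝒞, C
    rw [← hBeq]
    exact ⟨h1, h2⟩
  · intro y hy
    rw [Set.mem_iUnion₂] at hy
    obtain ⟨Cs, hCs, hyC⟩ := hy
    set Ct : T := ⟨Cs, hCs⟩ with hCt
    have hne : Ct.1.Nonempty := ⟨y, hyC⟩
    have homega := (hγfun Ct hne).2.2 y hyC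
    have hmemΓ : γfun Ct ∈ Γ := by
      rw [hΓ, Finset.mem_image]
      exact ⟨Ct, Finset.mem_filter.mpr ⟨Finset.mem_attach _ _, hne⟩, rfl⟩
    refine ⟨Γ.equivFin ⟨γfun Ct, hmemΓ⟩, ?_⟩
    show omegaSet f y = ((Γ.equivFin.symm (Γ.equivFin ⟨γfun Ct, hmemΓ⟩) : Γ) : Set X)
    rw [Equiv.symm_apply_apply]
    exact homega
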